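/- Let ν ⊆ κ be partitions with at most r parts such that ρ := κ/ν is a ribbon. Let σ be the permutation that sorts the sequence (β_1,...,β_{b-1}, β_b - h, β_{b+1},...,β_r) into decreasing order, where (β_1,...,β_r) = β_r(κ), b is the row of the tail of ρ, and h is the length of ρ. Then the length of σ (number of inversions) equals the height of ρ, i.e., the difference between the row index of the head of ρ and the row index of the tail of ρ. -/

import Mathlib

/-- Two boxes share a common side. -/
def Adj (a b : ℕ × ℕ) : Prop :=
  (a.1 = b.1 ∧ (a.2 = b.2 + 1 ∨ b.2 = a.2 + 1)) ∨
  (a.2 = b.2 ∧ (a.1 = b.1 + 1 ∨ b.1 = a.1 + 1))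

/-- A diagram is connected if any two of its boxes are joined by a path of
side-adjacent boxes lying inside the diagram. -/
def IsConnectedDiagram (θ : Set (ℕ × ℕ)) : Prop :=
  ∀ a ∈ θ, ∀ b ∈ θ, Relation.ReflTransGen (fun x y => y ∈ θ ∧ Adj x y) a b

/-- The diagram contains no 2×2 block of boxes. -/
def NoSquare (θ : Set (ℕ × ℕ)) : Prop :=
  ¬ ∃ i j : ℕ, (i, j) ∈ θ ∧ (i + 1, j) ∈ θ ∧ (i, j + 1) ∈ θ ∧ (i + 1, j + 1) ∈ θ

/-- A ribbon: a nonempty connected diagram with no 2×2 block of boxes. -/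
def IsRibbon (θ : Set (ℕ × ℕ)) : Prop :=
  θ.Nonempty ∧ IsConnectedDiagram θ ∧ NoSquare θ

/-- Young diagram (rows and columns numbered from 1) of a partition with
at most `r` parts, given as `f : Fin r → ℕ`. -/
def cellsF {r : ℕ} (f : Fin r → ℕ) : Set (ℕ × ℕ) :=
  {p | ∃ i : Fin r, p.1 = (i : ℕ) + 1 ∧ 1 ≤ p.2 ∧ p.2 ≤ f i}

/-- The β-number `λ_i + s + 1 - i` (0-based index `i : Fin r`). -/
def betaNum {r : ℕ} (s : ℤ) (f : Fin r → ℕ) (i : Fin r) : ℤ :=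
  (f i : ℤ) + s - (i : ℤ)

/-- The set of β-numbers. -/
def betaFinset {r : ℕ} (s : ℤ) (f : Fin r → ℕ) : Finset ℤ :=
  Finset.image (betaNum s f) Finset.univ

/-- Dominance: all partial sums of `ν` are at most those of `κ`. -/
def Dominates {r : ℕ} (ν κ : Fin r → ℕ) : Prop :=
  ∀ k : Fin r, ∑ i ∈ Finset.univ.filter (· ≤ k), ν i ≤ ∑ i ∈ Finset.univ.filter (· ≤ k), κ i

/-- Strict dominance. -/
def StrictlyDominates {r : ℕ} (ν κ : Fin r → ℕ) : Prop :=
  Dominates ν κ ∧ ν ≠ κ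

lemma reach_mem {θ : Set (ℕ × ℕ)} {x y : ℕ × ℕ} (hx : x ∈ θ)
    (hp : Relation.ReflTransGen (fun u v => v ∈ θ ∧ Adj u v) x y) : y ∈ θ := by
  induction hp with
  | refl => exact hx
  | tail _ h _ => exact h.1

lemma rows_exist_up {θ : Set (ℕ × ℕ)} {x y : ℕ × ℕ} (hx : x ∈ θ)
    (hp : Relation.ReflTransGen (fun u v => v ∈ θ ∧ Adj u v) x y) :
    ∀ m, x.1 ≤ m → m ≤ y.1 → ∃ c ∈ θ, c.1 = m := by
  induction hp with
  | refl => exact fun m h1 h2 => ⟨x, hx, le_antisymm h1 h2⟩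
  | @tail u v _ huv ih =>
    intro m h1 h2
    have hv1 : v.1 ≤ u.1 + 1 := by rcases huv.2 with ⟨h, _⟩ | ⟨h, h' | h'⟩ <;> omega
    by_cases hm : m ≤ u.1
    · exact ih m h1 hm
    · exact ⟨v, huv.1, by omega⟩

lemma rows_exist_down {θ : Set (ℕ × ℕ)} {x y : ℕ × ℕ} (hx : x ∈ θ)
    (hp : Relation.ReflTransGen (fun u v => v ∈ θ ∧ Adj u v) x y) :
    ∀ m, y.1 ≤ m → m ≤ x.1 → ∃ c ∈ θ, c.1 = m := by
  induction hp with
  | refl => exact fun m h1 h2 => ⟨x, hx, le_antisymm h1 h2⟩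
  | @tail u v _ huv ih =>
    intro m h1 h2
    have hv1 : u.1 ≤ v.1 + 1 := by rcases huv.2 with ⟨h, _⟩ | ⟨h, h' | h'⟩ <;> omega
    by_cases hm : u.1 ≤ m
    · exact ih m hm h2
    · exact ⟨v, huv.1, by omega⟩

lemma cross_exists {θ : Set (ℕ × ℕ)} {x y : ℕ × ℕ} (hx : x ∈ θ)
    (hp : Relation.ReflTransGen (fun u v => v ∈ θ ∧ Adj u v) x y)
    (t : ℕ) (h1 : x.1 ≤ t) (h2 : t + 1 ≤ y.1) :
    ∃ j, (t, j) ∈ θ ∧ (t + 1, j) ∈ θ := by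
  induction hp with
  | refl => omega
  | @tail u v hu huv ih =>
    by_cases hm : t + 1 ≤ u.1
    · exact ih hm
    · have hv1 : v.1 ≤ u.1 + 1 := by rcases huv.2 with ⟨h, _⟩ | ⟨h, h' | h'⟩ <;> omega
      have hu1 : u.1 = t := by omega
      have hvv : v.1 = t + 1 := by omega
      have hcol : u.2 = v.2 := by
        rcases huv.2 with ⟨h, _⟩ | ⟨h, _⟩
        · omega
        · exact h
      have humem : u ∈ θ := reach_mem hx hu
      refine ⟨u.2, ?_, ?_⟩
      · have : (t, u.2) = u := by rw [← hu1]
        exact this ▸ humem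
      · have : (t + 1, u.2) = v := by rw [← hvv, hcol]
        exact this ▸ huv.1

lemma mem_skew_iff {r : ℕ} {ν κ : Fin r → ℕ} (p : ℕ × ℕ) :
    p ∈ cellsF κ \ cellsF ν ↔ ∃ i : Fin r, p.1 = (i : ℕ) + 1 ∧ ν i < p.2 ∧ p.2 ≤ κ i := by
  constructor
  · rintro ⟨⟨i, hi1, hi2, hi3⟩, hn⟩
    refine ⟨i, hi1, ?_, hi3⟩
    by_contra hle
    exact hn ⟨i, hi1, hi2, by omega⟩
  · rintro ⟨i, hi1, hi2, hi3⟩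
    refine ⟨⟨i, hi1, by omega, hi3⟩, ?_⟩
    rintro ⟨i', hi'1, hi'2, hi'3⟩
    have : i' = i := Fin.ext (by omega)
    subst this
    omega

lemma sub_le_of_cells {r : ℕ} {ν κ : Fin r → ℕ} (hsub : cellsF ν ⊆ cellsF κ) (i : Fin r) :
    ν i ≤ κ i := by
  by_cases h0 : ν i = 0
  · omega
  · have : ((i : ℕ) + 1, ν i) ∈ cellsF ν := ⟨i, rfl, by omega, le_rfl⟩
    obtain ⟨i', h1, h2, h3⟩ := hsub this
    have : i' = i := Fin.ext (by simp only [Prod.fst] at h1; omega)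
    subst this
    exact le_trans (by omega) h3

lemma telescope (r : ℕ) (F G : ℕ → ℤ) :
    ∀ a b : ℕ, b ≤ a → (∀ i, b ≤ i → i < a → F (i+1) = G i + 1) →
    ∑ i ∈ Finset.Icc b a, (F i - G i) = F b - G a + a - b := by
  intro a
  induction a with
  | zero => intro b hb _; interval_cases b; simp
  | succ a ih =>
    intro b hb hcons
    rcases Nat.lt_or_ge b (a+1) with hba | hba
    · have hb' : b ≤ a := by omega
      rw [Finset.sum_Icc_succ_top (by omega)]
      rw [ih b hb' (fun i h1 h2 => hcons i h1 (by omega))]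
      have := hcons a hb' (by omega)
      push_cast
      omega
    · have : b = a + 1 := by omega
      subst this; simp

lemma skew_ncard {r : ℕ} (ν κ : Fin r → ℕ) :
    (cellsF κ \ cellsF ν).ncard = ∑ i : Fin r, (κ i - ν i) := by
  have hset : cellsF κ \ cellsF ν =
      ↑(Finset.univ.biUnion fun i : Fin r =>
        (Finset.Ioc (ν i) (κ i)).image fun j => ((i : ℕ) + 1, j)) := by
    ext p
    rw [mem_skew_iff]
    simp only [Finset.coe_biUnion, Finset.coe_image, Finset.mem_coe, Set.mem_iUnion,
      Set.mem_image, Finset.coe_Ioc, Set.mem_Ioc, Finset.mem_univ, Set.iUnion_true]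
    constructor
    · rintro ⟨i, h1, h2, h3⟩
      exact ⟨i, p.2, ⟨h2, h3⟩, by rw [← h1]⟩
    · rintro ⟨i, j, ⟨h2, h3⟩, rfl⟩
      exact ⟨i, rfl, h2, h3⟩
  rw [hset, Set.ncard_coe_finset, Finset.card_biUnion]
  · refine Finset.sum_congr rfl fun i _ => ?_
    rw [Finset.card_image_of_injective _ (fun x y hxy => by simpa using hxy), Nat.card_Ioc]
  · intro i _ j _ hij
    simp only [Finset.disjoint_left, Finset.mem_image]
    rintro p ⟨x, _, rfl⟩ ⟨y, _, hy⟩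
    have h2 := congrArg Prod.fst hy
    simp only [Prod.fst] at h2
    exact hij (Fin.ext (by omega)).symm

lemma perm_count {r : ℕ} (B : Fin r → ℤ) (c : ℤ) (b a : Fin r)
    (hba : (b : ℕ) ≤ (a : ℕ))
    (Banti : ∀ i j : Fin r, (i : ℕ) < (j : ℕ) → B j < B i)
    (hc1 : c < B a) (hc2 : ∀ i : Fin r, (a : ℕ) < (i : ℕ) → B i < c)
    (σ : Equiv.Perm (Fin r))
    (hsort : StrictAnti (fun j : Fin r => if σ j = b then c else B (σ j))) :
    ((Finset.univ : Finset (Fin r × Fin r)).filter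
        (fun p => p.1 < p.2 ∧ σ p.2 < σ p.1)).card = (a : ℕ) - (b : ℕ) := by
  have Ble : ∀ i j : Fin r, (i : ℕ) ≤ (j : ℕ) → B j ≤ B i := by
    intro i j hij
    rcases eq_or_lt_of_le hij with heq | hlt
    · rw [Fin.ext heq]
    · exact le_of_lt (Banti i j hlt)
  have hcB : ∀ i : Fin r, (i : ℕ) ≤ (a : ℕ) → c < B i :=
    fun i hi => lt_of_lt_of_le hc1 (Ble i a hi)
  set g : Fin r → ℤ := fun i => if i = b then c else B i with hg
  -- injectivity of g
  have ginj : Function.Injective g := by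
    intro i j hij
    simp only [hg] at hij
    by_cases hi : i = b <;> by_cases hj : j = b
    · rw [hi, hj]
    · exfalso
      rw [if_pos hi, if_neg hj] at hij
      rcases Nat.lt_or_ge (a : ℕ) (j : ℕ) with hja | hja
      · exact absurd hij.symm (ne_of_lt (hc2 j hja))
      · exact absurd hij (ne_of_lt (hcB j hja))
    · exfalso
      rw [if_neg hi, if_pos hj] at hij
      rcases Nat.lt_or_ge (a : ℕ) (i : ℕ) with hia | hia
      · exact absurd hij (ne_of_lt (hc2 i hia))
      · exact absurd hij.symm (ne_of_lt (hcB i hia))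
    · rw [if_neg hi, if_neg hj] at hij
      rcases Nat.lt_trichotomy (i : ℕ) (j : ℕ) with hlt | heq | hlt
      · exact absurd hij.symm (ne_of_lt (Banti i j hlt))
      · exact Fin.ext heq
      · exact absurd hij (ne_of_lt (Banti j i hlt))
  -- the explicit sorting map
  set m : Fin r → Fin r := fun j =>
    if (j : ℕ) < (b : ℕ) then j
    else if hj : (j : ℕ) < (a : ℕ) then ⟨(j : ℕ) + 1, Nat.lt_of_le_of_lt hj a.isLt⟩
    else if (j : ℕ) = (a : ℕ) then b else j with hm
  have hm_lt : ∀ j : Fin r, (j : ℕ) < (b : ℕ) → m j = j := by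
    intro j hj; simp only [hm, if_pos hj]
  have hm_mid : ∀ j : Fin r, (b : ℕ) ≤ (j : ℕ) → (j : ℕ) < (a : ℕ) →
      (m j : ℕ) = (j : ℕ) + 1 := by
    intro j h1 h2
    simp only [hm, if_neg (Nat.not_lt.mpr h1), dif_pos h2]
  have hm_a : m a = b := by
    simp only [hm]
    rw [if_neg (Nat.not_lt.mpr hba), dif_neg (lt_irrefl _)]
    simp
  have hm_gt : ∀ j : Fin r, (a : ℕ) < (j : ℕ) → m j = j := by
    intro j hj
    simp only [hm, if_neg (by omega : ¬(j : ℕ) < (b : ℕ)),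
      dif_neg (by omega : ¬(j : ℕ) < (a : ℕ)), if_neg (by omega : ¬(j : ℕ) = (a : ℕ))]
  -- values of g ∘ m
  have hgm_lt : ∀ j : Fin r, (j : ℕ) < (b : ℕ) → g (m j) = B j := by
    intro j hj
    rw [hm_lt j hj, hg]
    exact if_neg (fun hc => by rw [hc] at hj; omega)
  have hgm_mid : ∀ j : Fin r, (b : ℕ) ≤ (j : ℕ) → (j : ℕ) < (a : ℕ) →
      g (m j) = B (m j) ∧ (m j : ℕ) = (j : ℕ) + 1 := by
    intro j h1 h2
    have hv := hm_mid j h1 h2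
    refine ⟨?_, hv⟩
    rw [hg]
    exact if_neg (fun hc => by rw [hc] at hv; omega)
  have hgm_a : g (m a) = c := by rw [hm_a, hg]; exact if_pos rfl
  have hgm_gt : ∀ j : Fin r, (a : ℕ) < (j : ℕ) → g (m j) = B j := by
    intro j hj
    rw [hm_gt j hj, hg]
    exact if_neg (fun hc => by rw [hc] at hj; omega)
  -- g ∘ m is strictly antitone
  have hmanti : StrictAnti (g ∘ m) := by
    intro j j' hlt
    have hlt' : (j : ℕ) < (j' : ℕ) := hlt
    simp only [Function.comp]
    rcases Nat.lt_or_ge (j' : ℕ) (b : ℕ) with h1 | h1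
    · rw [hgm_lt j (by omega), hgm_lt j' h1]
      exact Banti j j' hlt'
    rcases Nat.lt_or_ge (j' : ℕ) (a : ℕ) with h2 | h2
    · -- j' in middle
      obtain ⟨he', hv'⟩ := hgm_mid j' h1 h2
      rw [he']
      rcases Nat.lt_or_ge (j : ℕ) (b : ℕ) with h3 | h3
      · rw [hgm_lt j h3]; exact Banti _ _ (by omega)
      · obtain ⟨he, hv⟩ := hgm_mid j h3 (by omega)
        rw [he]; exact Banti _ _ (by omega)
    rcases Nat.lt_or_ge (a : ℕ) (j' : ℕ) with h4 | h4
    · -- j' above a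
      rw [hgm_gt j' h4]
      rcases Nat.lt_or_ge (j : ℕ) (b : ℕ) with h3 | h3
      · rw [hgm_lt j h3]; exact Banti _ _ (by omega)
      rcases Nat.lt_or_ge (j : ℕ) (a : ℕ) with h5 | h5
      · obtain ⟨he, hv⟩ := hgm_mid j h3 h5
        rw [he]
        calc B j' < c := hc2 j' h4
          _ < B (m j) := hcB _ (by omega)
      rcases Nat.lt_or_ge (a : ℕ) (j : ℕ) with h6 | h6
      · rw [hgm_gt j h6]; exact Banti _ _ hlt'
      · have hja : j = a := Fin.ext (by omega)
        rw [hja, hgm_a]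
        exact hc2 j' h4
    · -- j' = a
      have hj'a : j' = a := Fin.ext (by omega)
      rw [hj'a, hgm_a]
      rcases Nat.lt_or_ge (j : ℕ) (b : ℕ) with h3 | h3
      · rw [hgm_lt j h3]; exact hcB _ (by omega)
      · obtain ⟨he, hv⟩ := hgm_mid j h3 (by omega)
        rw [he]; exact hcB _ (by omega)
  -- m is surjective
  have msurj : Function.Surjective m := by
    intro k
    rcases Nat.lt_or_ge (k : ℕ) (b : ℕ) with h1 | h1
    · exact ⟨k, hm_lt k h1⟩
    rcases Nat.lt_or_ge (a : ℕ) (k : ℕ) with h2 | h2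
    · exact ⟨k, hm_gt k h2⟩
    rcases Nat.eq_or_lt_of_le h1 with h3 | h3
    · exact ⟨a, by rw [hm_a]; exact Fin.ext h3⟩
    · refine ⟨⟨(k : ℕ) - 1, by omega⟩, ?_⟩
      have := hm_mid ⟨(k : ℕ) - 1, by omega⟩ (by simp; omega) (by simp; omega)
      exact Fin.ext (by simp at this ⊢; omega)
  -- uniqueness of the sorting permutation
  have hσanti : StrictAnti (g ∘ σ) := hsort
  have hrange : Set.range (g ∘ σ) = Set.range (g ∘ m) := by
    rw [Set.range_comp, Set.range_comp, σ.surjective.range_eq, msurj.range_eq]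
  have heq : g ∘ σ = g ∘ m :=
    Set.range_injOn_strictAnti hσanti hmanti hrange
  have hσm : ∀ j, σ j = m j := fun j => ginj (congrFun heq j)
  -- count inversions
  have hfil : (Finset.univ : Finset (Fin r × Fin r)).filter
      (fun p => p.1 < p.2 ∧ σ p.2 < σ p.1) =
      (Finset.Ico b a).image (fun p => (p, a)) := by
    ext ⟨p, q⟩
    simp only [Finset.mem_filter, Finset.mem_univ, true_and, Finset.mem_image,
      Finset.mem_Ico, Prod.mk.injEq]
    constructor
    · rintro ⟨hpq, hinv⟩
      rw [hσm, hσm] at hinv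
      have hpq' : (p : ℕ) < (q : ℕ) := hpq
      have hinv' : (m q : ℕ) < (m p : ℕ) := hinv
      -- case analysis on q
      rcases Nat.lt_or_ge (q : ℕ) (b : ℕ) with h1 | h1
      · rw [hm_lt q h1, hm_lt p (by omega)] at hinv'; omega
      rcases Nat.lt_or_ge (q : ℕ) (a : ℕ) with h2 | h2
      · have hvq := hm_mid q h1 h2
        rcases Nat.lt_or_ge (p : ℕ) (b : ℕ) with h3 | h3
        · rw [hm_lt p h3] at hinv'; omega
        · have hvp := hm_mid p h3 (by omega)
          omega
      rcases Nat.lt_or_ge (a : ℕ) (q : ℕ) with h4 | h4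
      · rw [hm_gt q h4] at hinv'
        rcases Nat.lt_or_ge (p : ℕ) (b : ℕ) with h3 | h3
        · rw [hm_lt p h3] at hinv'; omega
        rcases Nat.lt_or_ge (p : ℕ) (a : ℕ) with h5 | h5
        · have hvp := hm_mid p h3 h5; omega
        rcases Nat.eq_or_lt_of_le h5 with h6 | h6
        · have hpa : p = a := Fin.ext h6.symm
          rw [hpa, hm_a] at hinv'; omega
        · rw [hm_gt p h6] at hinv'; omega
      · -- q = a
        have hqa : q = a := Fin.ext (by omega)
        rw [hqa, hm_a] at hinv'
        rcases Nat.lt_or_ge (p : ℕ) (b : ℕ) with h3 | h3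
        · rw [hm_lt p h3] at hinv'; omega
        · refine ⟨p, ⟨h3, by omega⟩, rfl, hqa.symm⟩
    · rintro ⟨x, ⟨hx1, hx2⟩, rfl, rfl⟩
      have hx1' : (b : ℕ) ≤ (x : ℕ) := hx1
      have hx2' : (x : ℕ) < (a : ℕ) := hx2
      refine ⟨hx2, ?_⟩
      rw [hσm, hσm, hm_a]
      have hvp := hm_mid x hx1' hx2'
      exact (by omega : (b : ℕ) < (m x : ℕ))
  rw [hfil, Finset.card_image_of_injective _ (fun x y hxy => by simpa using hxy),
    Fin.card_Ico]

/-- The permutation sorting the modified β-sequence of κ (β_b replaced by β_b - h)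
into decreasing order has length (number of inversions) equal to the height of the
ribbon ρ = κ/ν, i.e. (row of head) - (row of tail). -/
theorem stmt8 (r : ℕ) (s : ℤ) (ν κ : Fin r → ℕ) (hν : Antitone ν) (hκ : Antitone κ)
    (hsub : cellsF ν ⊆ cellsF κ)
    (hrib : IsRibbon (cellsF κ \ cellsF ν))
    (h : ℕ) (hcard : (cellsF κ \ cellsF ν).ncard = h)
    (hd tl : ℕ × ℕ)
    (hhd : hd ∈ cellsF κ \ cellsF ν)
    (hhdmin : ∀ x ∈ cellsF κ \ cellsF ν, (hd.2 : ℤ) - hd.1 ≤ (x.2 : ℤ) - x.1)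
    (htl : tl ∈ cellsF κ \ cellsF ν)
    (htlmax : ∀ x ∈ cellsF κ \ cellsF ν, (x.2 : ℤ) - x.1 ≤ (tl.2 : ℤ) - tl.1)
    (b : Fin r) (hb : tl.1 = (b : ℕ) + 1)
    (σ : Equiv.Perm (Fin r))
    (hsort : StrictAnti (fun j : Fin r =>
      if σ j = b then betaNum s κ b - (h : ℤ) else betaNum s κ (σ j))) :
    ((Finset.univ : Finset (Fin r × Fin r)).filter
        (fun p => p.1 < p.2 ∧ σ p.2 < σ p.1)).card = hd.1 - tl.1 := by
  have hle : ∀ i, ν i ≤ κ i := sub_le_of_cells hsub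
  obtain ⟨a, ha1, hνa, hκa⟩ := (mem_skew_iff hd).mp hhd
  obtain ⟨b', hb'1, hνb', hκb'⟩ := (mem_skew_iff tl).mp htl
  have hbb : b' = b := Fin.ext (by omega)
  rw [hbb] at hνb' hκb'
  have hrowa : ν a < κ a := by omega
  have hrowb : ν b < κ b := by omega
  -- head is the bottom-left cell of its row
  have hd2 : hd.2 = ν a + 1 := by
    have hmem : ((a : ℕ) + 1, ν a + 1) ∈ cellsF κ \ cellsF ν :=
      (mem_skew_iff _).mpr ⟨a, rfl, by omega, by omega⟩
    have := hhdmin _ hmem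
    simp only at this
    omega
  have tl2 : tl.2 = κ b := by
    have hmem : ((b : ℕ) + 1, κ b) ∈ cellsF κ \ cellsF ν :=
      (mem_skew_iff _).mpr ⟨b, rfl, by omega, le_rfl⟩
    have := htlmax _ hmem
    simp only at this
    omega
  have hconn := hrib.2.1
  have hnosq := hrib.2.2
  -- nonempty rows form an interval
  have hinterval : ∀ (i i' k : Fin r), ν i < κ i → ν i' < κ i' →
      (i : ℕ) ≤ (k : ℕ) → (k : ℕ) ≤ (i' : ℕ) → ν k < κ k := by
    intro i i' k hi hi' hik hki
    have hx : ((i : ℕ) + 1, κ i) ∈ cellsF κ \ cellsF ν :=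
      (mem_skew_iff _).mpr ⟨i, rfl, hi, le_rfl⟩
    have hy : ((i' : ℕ) + 1, κ i') ∈ cellsF κ \ cellsF ν :=
      (mem_skew_iff _).mpr ⟨i', rfl, hi', le_rfl⟩
    have hpath := hconn _ hx _ hy
    obtain ⟨c, hc, hc1⟩ := rows_exist_up hx hpath ((k : ℕ) + 1) (by simp; omega) (by simp; omega)
    obtain ⟨k', hk'1, hk'2, hk'3⟩ := (mem_skew_iff c).mp hc
    have : k' = k := Fin.ext (by omega)
    subst this
    omega
  -- consecutive nonempty rows overlap in exactly one column
  have hcons : ∀ (i j : Fin r), ν i < κ i → ν j < κ j → (i : ℕ) + 1 = (j : ℕ) →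
      κ j = ν i + 1 := by
    intro i j hi hj hij
    have hijlt : i < j := by rw [Fin.lt_def]; omega
    have hκji : κ j ≤ κ i := hκ (le_of_lt hijlt)
    have hνji : ν j ≤ ν i := hν (le_of_lt hijlt)
    have hx : ((i : ℕ) + 1, κ i) ∈ cellsF κ \ cellsF ν :=
      (mem_skew_iff _).mpr ⟨i, rfl, hi, le_rfl⟩
    have hy : ((j : ℕ) + 1, κ j) ∈ cellsF κ \ cellsF ν :=
      (mem_skew_iff _).mpr ⟨j, rfl, hj, le_rfl⟩
    have hpath := hconn _ hx _ hy
    obtain ⟨j0, hj0a, hj0b⟩ := cross_exists hx hpath ((i : ℕ) + 1) (le_refl _) (by simp; omega)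
    obtain ⟨i1, hi11, hi12, hi13⟩ := (mem_skew_iff _).mp hj0a
    obtain ⟨i2, hi21, hi22, hi23⟩ := (mem_skew_iff _).mp hj0b
    have e1 : i1 = i := Fin.ext (by simp only [Prod.fst] at hi11; omega)
    have e2 : i2 = j := Fin.ext (by simp only [Prod.fst] at hi21; omega)
    rw [e1] at hi12 hi13
    rw [e2] at hi22 hi23
    simp only [Prod.snd] at hi12 hi13 hi22 hi23
    -- so κ j ≥ ν i + 1; now exclude κ j ≥ ν i + 2 via NoSquare
    by_contra hne
    have hge2 : ν i + 2 ≤ κ j := by omega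
    exact hnosq ⟨(i : ℕ) + 1, ν i + 1,
      (mem_skew_iff _).mpr ⟨i, rfl, by omega, by omega⟩,
      (mem_skew_iff _).mpr ⟨j, by simp; omega, by omega, by omega⟩,
      (mem_skew_iff _).mpr ⟨i, rfl, by omega, by omega⟩,
      (mem_skew_iff _).mpr ⟨j, by simp; omega, by omega, by omega⟩⟩
  -- nonempty rows lie between b and a
  have hrowle : ∀ i : Fin r, ν i < κ i → (i : ℕ) ≤ (a : ℕ) := by
    intro i hi
    by_contra hcon
    push_neg at hcon
    have ha' : (a : ℕ) + 1 < r := by omega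
    set a' : Fin r := ⟨(a : ℕ) + 1, ha'⟩ with ha'def
    have hrowa' : ν a' < κ a' := hinterval a i a' hrowa hi (show (a:ℕ) ≤ (a:ℕ)+1 by omega) (show (a:ℕ)+1 ≤ (i:ℕ) by omega)
    have hka' : κ a' = ν a + 1 := hcons a a' hrowa hrowa' rfl
    have hνa'a : ν a' ≤ ν a := hν (by rw [Fin.le_def]; show (a:ℕ) ≤ (a:ℕ)+1; omega)
    have hmem : ((a' : ℕ) + 1, ν a' + 1) ∈ cellsF κ \ cellsF ν :=
      (mem_skew_iff _).mpr ⟨a', rfl, by omega, by omega⟩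
    have := hhdmin _ hmem
    have hval : (a' : ℕ) = (a : ℕ) + 1 := rfl
    simp only at this
    omega
  have hrowge : ∀ i : Fin r, ν i < κ i → (b : ℕ) ≤ (i : ℕ) := by
    intro i hi
    by_contra hcon
    push_neg at hcon
    have hb1 : 1 ≤ (b : ℕ) := by omega
    set b' : Fin r := ⟨(b : ℕ) - 1, by omega⟩ with hb'def
    have hrowb' : ν b' < κ b' := hinterval i b b' hi hrowb (show (i:ℕ) ≤ (b:ℕ)-1 by omega) (show (b:ℕ)-1 ≤ (b:ℕ) by omega)
    have hkb : κ b = ν b' + 1 := hcons b' b hrowb' hrowb (show (b:ℕ)-1+1 = (b:ℕ) by omega)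
    have hmem : ((b' : ℕ) + 1, κ b') ∈ cellsF κ \ cellsF ν :=
      (mem_skew_iff _).mpr ⟨b', rfl, hrowb', le_rfl⟩
    have := htlmax _ hmem
    have hval : (b' : ℕ) = (b : ℕ) - 1 := rfl
    simp only at this
    omega
  have hba : (b : ℕ) ≤ (a : ℕ) := hrowle b hrowb
  -- the cardinality computation
  have hsum : (h : ℤ) = (κ b : ℤ) - (ν a : ℤ) + (a : ℕ) - (b : ℕ) := by
    set K : ℕ → ℤ := fun n => if hn : n < r then (κ ⟨n, hn⟩ : ℤ) else 0 with hK
    set N : ℕ → ℤ := fun n => if hn : n < r then (ν ⟨n, hn⟩ : ℤ) else 0 with hN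
    have h1 : (h : ℤ) = ∑ i : Fin r, ((κ i : ℤ) - (ν i : ℤ)) := by
      rw [← hcard, skew_ncard, Nat.cast_sum]
      exact Finset.sum_congr rfl fun i _ => Nat.cast_sub (hle i)
    have h2 : ∑ i : Fin r, ((κ i : ℤ) - (ν i : ℤ)) = ∑ i ∈ Finset.range r, (K i - N i) := by
      rw [← Fin.sum_univ_eq_sum_range (fun i => K i - N i) r]
      refine Finset.sum_congr rfl fun i _ => ?_
      simp only [hK, hN, dif_pos i.isLt, Fin.eta]
    have h3 : ∑ i ∈ Finset.range r, (K i - N i) =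
        ∑ i ∈ Finset.Icc (b : ℕ) (a : ℕ), (K i - N i) := by
      refine (Finset.sum_subset ?_ ?_).symm
      · intro i hi
        simp only [Finset.mem_Icc] at hi
        simp only [Finset.mem_range]
        omega
      · intro i hi hni
        simp only [Finset.mem_range] at hi
        simp only [Finset.mem_Icc] at hni
        have : κ ⟨i, hi⟩ = ν ⟨i, hi⟩ := by
          rcases Nat.lt_or_ge (ν ⟨i, hi⟩) (κ ⟨i, hi⟩) with hl | hl
          · exact absurd ⟨hrowge _ hl, hrowle _ hl⟩ hni
          · exact le_antisymm hl (hle _)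
        simp only [hK, hN, dif_pos hi, this, sub_self]
    have h4 : ∑ i ∈ Finset.Icc (b : ℕ) (a : ℕ), (K i - N i) =
        K (b : ℕ) - N (a : ℕ) + (a : ℕ) - (b : ℕ) := by
      refine telescope r K N (a : ℕ) (b : ℕ) hba ?_
      intro i h1i h2i
      have hi1 : i < r := by omega
      have hi2 : i + 1 < r := by omega
      have hrow1 : ν ⟨i, hi1⟩ < κ ⟨i, hi1⟩ :=
        hinterval b a ⟨i, hi1⟩ hrowb hrowa (by simpa using h1i) (by simp; omega)
      have hrow2 : ν ⟨i + 1, hi2⟩ < κ ⟨i + 1, hi2⟩ :=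
        hinterval b a ⟨i + 1, hi2⟩ hrowb hrowa (by simp; omega) (by simp; omega)
      have := hcons ⟨i, hi1⟩ ⟨i + 1, hi2⟩ hrow1 hrow2 (by simp)
      simp only [hK, hN, dif_pos hi1, dif_pos hi2]
      rw [this]
      push_cast
      ring
    rw [h1, h2, h3, h4]
    simp only [hK, hN, dif_pos b.isLt, dif_pos a.isLt, Fin.eta]
  -- apply the permutation counting lemma
  have Banti : ∀ i j : Fin r, (i : ℕ) < (j : ℕ) → betaNum s κ j < betaNum s κ i := by
    intro i j hij
    have h1 : κ j ≤ κ i := hκ (by rw [Fin.le_def]; omega)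
    simp only [betaNum]
    omega
  have hc1 : betaNum s κ b - (h : ℤ) < betaNum s κ a := by
    simp only [betaNum]
    have : (ν a : ℤ) < (κ a : ℤ) := by exact_mod_cast hrowa
    omega
  have hc2 : ∀ i : Fin r, (a : ℕ) < (i : ℕ) → betaNum s κ i < betaNum s κ b - (h : ℤ) := by
    intro i hi
    have hrow : κ i = ν i := by
      rcases Nat.lt_or_ge (ν i) (κ i) with hl | hl
      · exact absurd (hrowle i hl) (by omega)
      · exact le_antisymm hl (hle i)
    have hνia : ν i ≤ ν a := hν (by rw [Fin.le_def]; omega)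
    simp only [betaNum]
    have : (ν i : ℤ) ≤ (ν a : ℤ) := by exact_mod_cast hνia
    rw [hrow]
    omega
  have := perm_count (betaNum s κ) (betaNum s κ b - (h : ℤ)) b a hba Banti hc1 hc2 σ hsort
  rw [this, ha1, hb]
  omega
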